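/- Let C be a nonempty closed convex subset of a real Hilbert space, let T_1,…,T_m : C → C be nonexpansive mappings with nonempty common fixed point set, and let μ_1,…,μ_m > 0 with ∑ μ_i = 1. Define T(x) := ∑ μ_i T_i(x). Then the fixed point set of T equals the intersection of the fixed point sets of the T_i. -/
import Mathlib

local notation "⟪" x ", " y "⟫" => @inner ℝ _ _ x y


theorem stmt_3 {H : Type*} [NormedAddCommGroup H] [InnerProductSpace ℝ H]
    [CompleteSpace H]
    (C : Set H) (hCne : C.Nonempty) (hCclosed : IsClosed C) (hCconv : Convex ℝ C)
    (m : ℕ) (T : Fin m → H → H)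
    (hmap : ∀ i, ∀ x ∈ C, T i x ∈ C)
    (hne : ∀ i, ∀ x ∈ C, ∀ y ∈ C, ‖T i x - T i y‖ ≤ ‖x - y‖)
    (hcommon : ∃ x ∈ C, ∀ i, T i x = x)
    (μ : Fin m → ℝ) (hμpos : ∀ i, 0 < μ i) (hμsum : ∑ i, μ i = 1) :
    {x ∈ C | (∑ i, μ i • T i x) = x} = ⋂ i, {x ∈ C | T i x = x} := by
  obtain ⟨z, hzC, hz⟩ := hcommon
  ext x
  simp only [Set.mem_setOf_eq, Set.mem_iInter]
  constructor
  · rintro ⟨hxC, hx⟩ i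
    refine ⟨hxC, ?_⟩
    set u := x - z with hu
    set v : Fin m → H := fun j => T j x - z with hv
    have hsum : ∑ j, μ j • v j = u := by
      have h1 : ∑ j, μ j • v j = (∑ j, μ j • T j x) - (∑ j, μ j) • z := by
        simp [hv, smul_sub, Finset.sum_sub_distrib, Finset.sum_smul]
      rw [h1, hx, hμsum, one_smul]
    have hvle : ∀ j, ‖v j‖ ≤ ‖u‖ := by
      intro j
      have h := hne j x hxC z hzC
      rw [hz j] at h
      exact h
    have hfle : ∀ j, ⟪v j, u⟫ ≤ ‖u‖ ^ 2 := by
      intro j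
      calc ⟪v j, u⟫ ≤ ‖v j‖ * ‖u‖ := real_inner_le_norm _ _
        _ ≤ ‖u‖ * ‖u‖ := mul_le_mul_of_nonneg_right (hvle j) (norm_nonneg u)
        _ = ‖u‖ ^ 2 := by ring
    have hsum_inner : ∑ j, μ j * ⟪v j, u⟫ = ‖u‖ ^ 2 := by
      have h := congrArg (fun w => ⟪w, u⟫) hsum
      simpa [sum_inner, real_inner_smul_left, real_inner_self_eq_norm_sq] using h
    have hsum' : ∑ j, μ j * ‖u‖ ^ 2 = ‖u‖ ^ 2 := by
      rw [← Finset.sum_mul, hμsum, one_mul]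
    have heach : ∀ j ∈ Finset.univ, μ j * ⟪v j, u⟫ = μ j * ‖u‖ ^ 2 := by
      rw [← Finset.sum_eq_sum_iff_of_le
        (fun j _ => mul_le_mul_of_nonneg_left (hfle j) (hμpos j).le)]
      rw [hsum_inner, hsum']
    have hinner : ⟪v i, u⟫ = ‖u‖ ^ 2 :=
      mul_left_cancel₀ (hμpos i).ne' (heach i (Finset.mem_univ i))
    have hnorm : ‖T i x - x‖ ^ 2 ≤ 0 := by
      have hvu : v i - u = T i x - x := by simp [hv, hu]
      have := norm_sub_sq_real (v i) u
      rw [hvu, hinner] at this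
      have hv2 : ‖v i‖ ^ 2 ≤ ‖u‖ ^ 2 := by
        have := hvle i
        nlinarith [norm_nonneg (v i)]
      nlinarith
    have : ‖T i x - x‖ = 0 := by nlinarith [norm_nonneg (T i x - x), sq_nonneg ‖T i x - x‖]
    have := norm_eq_zero.mp this
    exact sub_eq_zero.mp this
  · intro h
    obtain ⟨hxC, _⟩ := h ⟨0, Nat.pos_of_ne_zero (by rintro rfl; simp at hμsum)⟩
    refine ⟨hxC, ?_⟩
    calc ∑ j, μ j • T j x = ∑ j, μ j • x := by
          apply Finset.sum_congr rfl; intro j _; rw [(h j).2]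
      _ = (∑ j, μ j) • x := by rw [Finset.sum_smul]
      _ = x := by rw [hμsum, one_smul]
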